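/- For N ≥ 1, let μ_N = 2^{-N} ∑_{i=0}^{N} C(N,i) δ_{2i/N} be the spectral measure of the hypercube graph on 2^N vertices. Then d₁^W(μ_N, μ_{N+1}) = 1/(N+1). -/

import Mathlib

open MeasureTheory ENNReal

/-- The `p`-Wasserstein distance between two measures on `ℝ`, defined as the
infimum of transport costs over all couplings. -/
noncomputable def wassersteinDist (p : ℝ) (μ ν : Measure ℝ) : ℝ :=
  sInf {c : ℝ | ∃ π : Measure (ℝ × ℝ),
    π.map Prod.fst = μ ∧ π.map Prod.snd = ν ∧
    c = (∫ z : ℝ × ℝ, |z.1 - z.2| ^ p ∂π) ^ (1 / p)}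
/-- The spectral measure of the hypercube graph on `2^N` vertices. -/
noncomputable def cubeSpectralMeasure (N : ℕ) : Measure ℝ :=
  ((2 ^ N : ℝ≥0∞))⁻¹ •
    ∑ i ∈ Finset.range (N + 1),
      (N.choose i : ℝ≥0∞) • Measure.dirac ((2 * (i : ℝ)) / N)

open Finset

section Helpers

lemma integrable_dirac'' {α : Type*} [MeasurableSpace α] [MeasurableSingletonClass α]
    (f : α → ℝ) (a : α) : Integrable f (Measure.dirac a) := by
  refine (integrable_const (f a)).congr ?_
  rw [Filter.eventuallyEq_iff_exists_mem]
  exact ⟨{a}, by simp [MeasureTheory.ae_dirac_eq], by simp⟩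

lemma map_finset_sum' {α β ι : Type*} [MeasurableSpace α] [MeasurableSpace β]
    {f : α → β} (hf : Measurable f) (s : Finset ι) (μ : ι → Measure α) :
    (∑ i ∈ s, μ i).map f = ∑ i ∈ s, (μ i).map f := by
  classical
  induction s using Finset.induction_on with
  | empty => simp
  | insert _ _ h ih => rw [Finset.sum_insert h, Finset.sum_insert h, Measure.map_add _ _ hf, ih]

lemma integral_comb {α ι : Type*} [MeasurableSpace α] [MeasurableSingletonClass α]
    (r : ℝ≥0∞) (s : Finset ι) (a : ι → ℕ) (x : ι → α) (f : α → ℝ) :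
    ∫ y, f y ∂(r • ∑ i ∈ s, (a i : ℝ≥0∞) • Measure.dirac (x i))
      = r.toReal * ∑ i ∈ s, (a i : ℝ) * f (x i) := by
  rw [integral_smul_measure, integral_finset_sum_measure (fun i _ =>
    (integrable_dirac'' f (x i)).smul_measure (by simp))]
  simp [integral_smul_measure, integral_dirac, smul_eq_mul]

lemma integral_comb2 {α ι : Type*} [MeasurableSpace α] [MeasurableSingletonClass α]
    (r : ℝ≥0∞) (s : Finset ι) (a : ι → ℕ) (x y : ι → α) (f : α → ℝ) :
    ∫ t, f t ∂(r • ∑ i ∈ s, (a i : ℝ≥0∞) • (Measure.dirac (x i) + Measure.dirac (y i)))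
      = r.toReal * ∑ i ∈ s, (a i : ℝ) * (f (x i) + f (y i)) := by
  rw [integral_smul_measure, integral_finset_sum_measure (fun i _ =>
    ((integrable_dirac'' f (x i)).add_measure (integrable_dirac'' f (y i))).smul_measure
      (by simp))]
  congr 1
  refine Finset.sum_congr rfl fun i _ => ?_
  rw [integral_smul_measure,
    integral_add_measure (integrable_dirac'' f _) (integrable_dirac'' f _),
    integral_dirac, integral_dirac]
  simp [smul_eq_mul]

end Helpers

section KeyIneq

lemma key1 (n i j : ℤ) (hn : 1 ≤ n) (hi : 0 ≤ i) (hi' : i ≤ n+1) (hj : 0 ≤ j) (hj' : j ≤ n) :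
    j*(j-n) ≤ i*(i-n-1) + |j*(n+1) - i*n| := by
  rcases le_or_gt (i*n) (j*(n+1)) with h | h
  · rw [abs_of_nonneg (by linarith)]
    rcases le_or_gt i j with hij | hij
    · nlinarith [mul_nonneg (sub_nonneg.2 hij) (by linarith : (0:ℤ) ≤ 2*n+1-i-j)]
    · have h1 : n*(i-j) ≤ j := by nlinarith
      have h2 : 1 ≤ i - j := by omega
      have h3 : n ≤ j := by nlinarith
      have hjn : j = n := le_antisymm hj' h3
      have hin : i = n + 1 := by nlinarith
      subst hjn hin; ring_nf; nlinarith
  · rw [abs_of_neg (by linarith)]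
    have hij : j < i := by nlinarith
    nlinarith [mul_nonneg (by omega : (0:ℤ) ≤ i - j) (by omega : (0:ℤ) ≤ i + j + 1)]

lemma key2 (n i j : ℤ) (hi : 0 ≤ i) (hi' : i ≤ n+1) (hj : 0 ≤ j) (hj' : j ≤ n+1) :
    j*(j-n-1) ≤ i*(i-n-1) + |j - i| * n := by
  rcases eq_or_ne i j with rfl | hij
  · simp
  · have : (j-i)*(j+i-n-1) ≤ |j-i| * n := by
      calc (j-i)*(j+i-n-1) ≤ |(j-i)*(j+i-n-1)| := le_abs_self _
        _ = |j-i| * |j+i-n-1| := abs_mul _ _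
        _ ≤ |j-i| * n := by
            exact mul_le_mul_of_nonneg_left (abs_le.mpr ⟨by omega, by omega⟩) (abs_nonneg _)
    nlinarith [this]

end KeyIneq

section DualFunction

noncomputable def gf (N : ℕ) (x : ℝ) : ℝ :=
  (Finset.range (N+2)).inf' (Finset.nonempty_range_iff.mpr (by omega))
    (fun i => (2*i*((i:ℝ)-N-1))/((N:ℝ)*((N:ℝ)+1)) + |x - 2*i/((N:ℝ)+1)|)

lemma gf_le (N : ℕ) (x y : ℝ) : gf N x ≤ gf N y + |x - y| := by
  obtain ⟨i, hi, hiy⟩ := Finset.exists_mem_eq_inf'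
    (Finset.nonempty_range_iff.mpr (by omega : N+2 ≠ 0))
    (fun i => (2*i*((i:ℝ)-N-1))/((N:ℝ)*((N:ℝ)+1)) + |y - 2*i/((N:ℝ)+1)|)
  have h1 : gf N x ≤ (2*i*((i:ℝ)-N-1))/((N:ℝ)*((N:ℝ)+1)) + |x - 2*i/((N:ℝ)+1)| :=
    Finset.inf'_le _ hi
  have h2 : |x - 2*i/((N:ℝ)+1)| ≤ |x - y| + |y - 2*i/((N:ℝ)+1)| := abs_sub_le _ _ _
  have : gf N y = (2*i*((i:ℝ)-N-1))/((N:ℝ)*((N:ℝ)+1)) + |y - 2*i/((N:ℝ)+1)| := hiy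
  linarith

lemma abs_q_sub_q (N i j : ℕ) :
    |2*(j:ℝ)/((N:ℝ)+1) - 2*i/((N:ℝ)+1)| = 2*|(j:ℝ)-(i:ℝ)| / ((N:ℝ)+1) := by
  have hN1 : (0:ℝ) < (N:ℝ)+1 := by positivity
  rw [show 2*(j:ℝ)/((N:ℝ)+1) - 2*i/((N:ℝ)+1) = 2*((j:ℝ)-i)/((N:ℝ)+1) by ring,
    abs_div, abs_of_pos hN1, abs_mul, abs_two]

lemma gf_eval_q (N : ℕ) (hN : 1 ≤ N) (j : ℕ) (hj : j ≤ N+1) :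
    gf N (2*j/((N:ℝ)+1)) = 2*j*((j:ℝ)-N-1)/((N:ℝ)*((N:ℝ)+1)) := by
  have hNpos : (0:ℝ) < N := by exact_mod_cast hN
  have hc : (0:ℝ) < (N:ℝ)*((N:ℝ)+1) := by positivity
  apply le_antisymm
  · unfold gf
    refine le_trans (Finset.inf'_le _ (Finset.mem_range.mpr (by omega : j < N+2))) (le_of_eq ?_)
    simp
  · apply Finset.le_inf'
    intro i hi
    have hi' : i ≤ N+1 := by have := Finset.mem_range.mp hi; omega
    have hZ := key2 (N:ℤ) i j (by positivity) (by exact_mod_cast hi') (by positivity)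
      (by exact_mod_cast hj)
    have HR : (j:ℝ)*((j:ℝ)-(N:ℝ)-1) ≤ (i:ℝ)*((i:ℝ)-(N:ℝ)-1) + |(j:ℝ)-(i:ℝ)| * (N:ℝ) := by
      exact_mod_cast hZ
    rw [abs_q_sub_q N i j]
    rw [show 2*|(j:ℝ)-(i:ℝ)| / ((N:ℝ)+1) = 2*|(j:ℝ)-(i:ℝ)| * (N:ℝ)/((N:ℝ)*((N:ℝ)+1)) by
      field_simp, ← add_div, div_le_div_iff₀ hc hc]
    nlinarith [HR, hc]

lemma gf_eval_p (N : ℕ) (hN : 1 ≤ N) (j : ℕ) (hj : j ≤ N) :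
    gf N (2*j/(N:ℝ)) = 2*j*((j:ℝ)-N)/((N:ℝ)*((N:ℝ)+1)) := by
  have hNpos : (0:ℝ) < N := by exact_mod_cast hN
  have hc : (0:ℝ) < (N:ℝ)*((N:ℝ)+1) := by positivity
  apply le_antisymm
  · unfold gf
    refine le_trans (Finset.inf'_le _ (Finset.mem_range.mpr (by omega : j < N+2))) (le_of_eq ?_)
    rw [show 2*(j:ℝ)/(N:ℝ) - 2*(j:ℝ)/((N:ℝ)+1) = 2*(j:ℝ)/((N:ℝ)*((N:ℝ)+1)) by field_simp; ring,
      abs_of_nonneg (by positivity), ← add_div]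
    congr 1
    ring
  · apply Finset.le_inf'
    intro i hi
    have hi' : i ≤ N+1 := by have := Finset.mem_range.mp hi; omega
    have hZ := key1 (N:ℤ) i j (by exact_mod_cast hN) (by positivity) (by exact_mod_cast hi')
      (by positivity) (by exact_mod_cast hj)
    have HR : (j:ℝ)*((j:ℝ)-(N:ℝ)) ≤ (i:ℝ)*((i:ℝ)-(N:ℝ)-1) + |(j:ℝ)*((N:ℝ)+1) - (i:ℝ)*(N:ℝ)| := by
      exact_mod_cast hZ
    rw [show 2*(j:ℝ)/(N:ℝ) - 2*(i:ℝ)/((N:ℝ)+1)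
        = 2*((j:ℝ)*((N:ℝ)+1) - (i:ℝ)*(N:ℝ))/((N:ℝ)*((N:ℝ)+1)) by field_simp,
      abs_div, abs_of_pos hc, abs_mul, abs_two, ← add_div, div_le_div_iff₀ hc hc]
    nlinarith [HR, hc]

lemma gf_lipschitz (N : ℕ) : LipschitzWith 1 (gf N) := by
  apply LipschitzWith.of_dist_le_mul
  intro x y
  simp only [Real.dist_eq, NNReal.coe_one, one_mul]
  rw [abs_sub_le_iff]
  constructor
  · linarith [gf_le N x y]
  · linarith [gf_le N y x, (abs_sub_comm x y).le, (abs_sub_comm y x).le]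

lemma gf_bound (N : ℕ) (x : ℝ) (hx : x ∈ Set.Icc (0:ℝ) 2) : |gf N x| ≤ |gf N 0| + 2 := by
  have h1 := gf_le N x 0
  have h2 := gf_le N 0 x
  have hx0 : |x - 0| ≤ 2 := by
    rw [sub_zero, abs_le]; exact ⟨by linarith [hx.1], hx.2⟩
  have hx0' : |0 - x| ≤ 2 := by rwa [abs_sub_comm]
  rw [abs_le]
  constructor
  · nlinarith [neg_abs_le (gf N 0)]
  · nlinarith [le_abs_self (gf N 0)]

end DualFunction

section BinomialSums

lemma NL1 (n : ℕ) : ∑ j ∈ range (n+1), j * n.choose j = n * 2^(n-1) := by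
  cases n with
  | zero => simp
  | succ m =>
    rw [Finset.sum_range_succ']
    have hterm : ∀ k : ℕ, (k+1) * ((m+1).choose (k+1)) = (m+1) * (m.choose k) := by
      intro k
      rw [mul_comm, ← Nat.add_one_mul_choose_eq]
    simp only [hterm]
    rw [← Finset.mul_sum, Nat.sum_range_choose]
    simp

lemma NL2 (n : ℕ) :
    ∑ j ∈ range (n+1), j^2 * n.choose j = n * 2^(n-1) + n*(n-1)*2^(n-2) := by
  cases n with
  | zero => simp
  | succ m =>
    rw [Finset.sum_range_succ']
    have hterm : ∀ k : ℕ, (k+1)^2 * ((m+1).choose (k+1)) = (m+1) * ((k+1) * m.choose k) := by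
      intro k
      have h := Nat.add_one_mul_choose_eq m k
      calc (k+1)^2 * ((m+1).choose (k+1)) = (k+1)*((m+1).choose (k+1) * (k+1)) := by ring
        _ = (k+1)*((m+1) * m.choose k) := by rw [← h]
        _ = (m+1)*((k+1) * m.choose k) := by ring
    simp only [hterm]
    rw [← Finset.mul_sum]
    have : ∑ k ∈ range (m+1), (k+1) * m.choose k
        = (∑ k ∈ range (m+1), k * m.choose k) + ∑ k ∈ range (m+1), m.choose k := by
      rw [← Finset.sum_add_distrib]
      exact Finset.sum_congr rfl fun k _ => by ring
    rw [this, NL1 m, Nat.sum_range_choose]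
    simp only [Nat.add_sub_cancel]
    rw [show m+1-2 = m-1 by omega]
    ring

lemma RL1 (n : ℕ) (hn : 1 ≤ n) :
    ∑ j ∈ range (n+1), (j:ℝ) * (n.choose j) = n * 2^n / 2 := by
  obtain ⟨m, rfl⟩ : ∃ m, n = m+1 := ⟨n-1, by omega⟩
  have h := congrArg (Nat.cast (R := ℝ)) (NL1 (m+1))
  push_cast at h
  rw [h]
  push_cast
  ring

lemma RL2 (n : ℕ) (hn : 1 ≤ n) :
    ∑ j ∈ range (n+1), (j:ℝ)^2 * (n.choose j) = n * (n+1) * 2^n / 4 := by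
  obtain ⟨m, rfl⟩ : ∃ m, n = m+1 := ⟨n-1, by omega⟩
  cases m with
  | zero => norm_num [Finset.sum_range_succ]
  | succ k =>
    have h := congrArg (Nat.cast (R := ℝ)) (NL2 (k+2))
    push_cast at h
    rw [show k+1+1 = k+2 from rfl, h]
    push_cast
    ring

end BinomialSums

section CubeIntegrals

lemma integral_cube (M : ℕ) (f : ℝ → ℝ) :
    ∫ x, f x ∂(cubeSpectralMeasure M)
      = ((2:ℝ)^M)⁻¹ * ∑ i ∈ range (M+1), (M.choose i : ℝ) * f (2*i/(M:ℝ)) := by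
  unfold cubeSpectralMeasure
  rw [integral_comb]
  congr 1
  rw [ENNReal.toReal_inv]
  norm_num

lemma cube_univ (M : ℕ) : cubeSpectralMeasure M Set.univ = 1 := by
  unfold cubeSpectralMeasure
  rw [Measure.smul_apply, Measure.finset_sum_apply]
  simp only [Measure.smul_apply, measure_univ, smul_eq_mul, mul_one]
  rw [← Nat.cast_sum, Nat.sum_range_choose]
  push_cast
  exact ENNReal.inv_mul_cancel (by positivity) (by simp)

lemma cube_compl_Icc (M : ℕ) (hM : 1 ≤ M) : cubeSpectralMeasure M (Set.Icc (0:ℝ) 2)ᶜ = 0 := by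
  have hMpos : (0:ℝ) < M := by exact_mod_cast hM
  unfold cubeSpectralMeasure
  rw [Measure.smul_apply, Measure.finset_sum_apply]
  have : ∀ i ∈ Finset.range (M+1),
      ((M.choose i : ℝ≥0∞) • Measure.dirac ((2 * (i:ℝ))/M)) (Set.Icc (0:ℝ) 2)ᶜ = 0 := by
    intro i hi
    have hi' : i ≤ M := by have := Finset.mem_range.mp hi; omega
    have hmem : (2 * (i:ℝ))/M ∈ Set.Icc (0:ℝ) 2 := by
      constructor
      · positivity
      · rw [div_le_iff₀ hMpos]
        have : (i:ℝ) ≤ M := by exact_mod_cast hi'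
        linarith
    rw [Measure.smul_apply, Measure.dirac_apply' _ (measurableSet_Icc.compl)]
    simp [hmem]
  rw [Finset.sum_congr rfl this]
  simp

lemma int_cube_N (N : ℕ) (hN : 1 ≤ N) :
    ∫ x, gf N x ∂(cubeSpectralMeasure N) = (1-(N:ℝ))/(2*((N:ℝ)+1)) := by
  have hNpos : (0:ℝ) < N := by exact_mod_cast hN
  rw [integral_cube]
  have hsum : ∀ j ∈ range (N+1), (N.choose j : ℝ) * gf N (2*j/(N:ℝ))
      = (2/((N:ℝ)*((N:ℝ)+1))) * ((j:ℝ)^2 * (N.choose j))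
        - (2*(N:ℝ)/((N:ℝ)*((N:ℝ)+1))) * ((j:ℝ) * (N.choose j)) := by
    intro j hj
    rw [gf_eval_p N hN j (by have := Finset.mem_range.mp hj; omega)]
    field_simp
  rw [Finset.sum_congr rfl hsum, Finset.sum_sub_distrib, ← Finset.mul_sum, ← Finset.mul_sum,
    RL1 N hN, RL2 N hN]
  have h2 : (2:ℝ)^N ≠ 0 := by positivity
  field_simp
  ring

lemma int_cube_N1 (N : ℕ) (hN : 1 ≤ N) :
    ∫ x, gf N x ∂(cubeSpectralMeasure (N+1)) = -(1/2) := by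
  have hNpos : (0:ℝ) < N := by exact_mod_cast hN
  rw [integral_cube]
  have hsum : ∀ j ∈ range (N+2), ((N+1).choose j : ℝ) * gf N (2*j/((N+1:ℕ):ℝ))
      = (2/((N:ℝ)*((N:ℝ)+1))) * ((j:ℝ)^2 * ((N+1).choose j))
        - (2*((N:ℝ)+1)/((N:ℝ)*((N:ℝ)+1))) * ((j:ℝ) * ((N+1).choose j)) := by
    intro j hj
    rw [show ((N+1:ℕ):ℝ) = (N:ℝ)+1 by push_cast; ring,
      gf_eval_q N hN j (by have := Finset.mem_range.mp hj; omega)]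
    field_simp
    ring
  rw [Finset.sum_congr rfl hsum, Finset.sum_sub_distrib, ← Finset.mul_sum, ← Finset.mul_sum,
    RL1 (N+1) (by omega), RL2 (N+1) (by omega)]
  have h2 : (2:ℝ)^(N+1) ≠ 0 := by positivity
  push_cast
  field_simp
  ring

end CubeIntegrals

section Coupling

noncomputable def cpl (N : ℕ) : Measure (ℝ × ℝ) :=
  (2^(N+1) : ℝ≥0∞)⁻¹ • ∑ s ∈ range (N+1), (N.choose s : ℝ≥0∞) •
    (Measure.dirac ((2*(s:ℝ)/(N:ℝ), 2*(s:ℝ)/((N:ℝ)+1)) : ℝ × ℝ)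
      + Measure.dirac ((2*(s:ℝ)/(N:ℝ), 2*((s+1:ℕ):ℝ)/((N:ℝ)+1)) : ℝ × ℝ))

lemma pascal_measure (N : ℕ) (Q : ℕ → Measure ℝ) :
    ∑ s ∈ range (N+1), (N.choose s : ℝ≥0∞) • (Q s + Q (s+1))
      = ∑ j ∈ range (N+2), ((N+1).choose j : ℝ≥0∞) • Q j := by
  conv_rhs => rw [Finset.sum_range_succ' _ (N+1)]
  simp only [Nat.choose_succ_succ, Nat.cast_add, add_smul, Nat.choose_zero_right,
    Nat.cast_one, one_smul]
  rw [Finset.sum_add_distrib]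
  simp only [smul_add]
  rw [Finset.sum_add_distrib]
  have h : ∑ s ∈ range (N+1), (N.choose s : ℝ≥0∞) • Q s
      = (∑ s ∈ range (N+1), (N.choose (s+1) : ℝ≥0∞) • Q (s+1))
        + (N.choose 0 : ℝ≥0∞) • Q 0 := by
    calc ∑ s ∈ range (N+1), (N.choose s : ℝ≥0∞) • Q s
        = ∑ s ∈ range (N+2), (N.choose s : ℝ≥0∞) • Q s := by
          rw [Finset.sum_range_succ (n := N+1)]
          simp [Nat.choose_succ_self]
      _ = _ := Finset.sum_range_succ' _ (N+1)
  rw [h]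
  simp only [Nat.choose_zero_right, Nat.cast_one, one_smul]
  abel

lemma scalar_half (N : ℕ) : ((2:ℝ≥0∞)^(N+1))⁻¹ * 2 = ((2:ℝ≥0∞)^N)⁻¹ := by
  rw [pow_succ, ENNReal.mul_inv (Or.inl (by positivity)) (Or.inr (by simp)),
    mul_assoc, ENNReal.inv_mul_cancel (by simp) (by simp), mul_one]

lemma cpl_fst (N : ℕ) (hN : 1 ≤ N) : (cpl N).map Prod.fst = cubeSpectralMeasure N := by
  unfold cpl cubeSpectralMeasure
  rw [Measure.map_smul, map_finset_sum' measurable_fst]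
  have hterm : ∀ s ∈ range (N+1),
      (((N.choose s : ℝ≥0∞)) • (Measure.dirac ((2*(s:ℝ)/(N:ℝ), 2*(s:ℝ)/((N:ℝ)+1)) : ℝ × ℝ)
        + Measure.dirac ((2*(s:ℝ)/(N:ℝ), 2*((s+1:ℕ):ℝ)/((N:ℝ)+1)) : ℝ × ℝ))).map Prod.fst
      = (2 * (N.choose s) : ℝ≥0∞) • Measure.dirac (2*(s:ℝ)/(N:ℝ)) := by
    intro s _
    rw [Measure.map_smul, Measure.map_add _ _ measurable_fst,
      Measure.map_dirac' measurable_fst, Measure.map_dirac' measurable_fst]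
    simp only []
    rw [← two_smul ℝ≥0∞ (Measure.dirac (2*(s:ℝ)/(N:ℝ))), smul_smul, mul_comm]
  rw [Finset.sum_congr rfl hterm]
  have : ∀ s ∈ range (N+1), (2 * (N.choose s) : ℝ≥0∞) • Measure.dirac (2*(s:ℝ)/(N:ℝ))
      = (2:ℝ≥0∞) • ((N.choose s : ℝ≥0∞) • Measure.dirac (2*(s:ℝ)/(N:ℝ))) := by
    intro s _
    rw [smul_smul]
  rw [Finset.sum_congr rfl this, ← Finset.smul_sum, smul_smul, scalar_half]

lemma cpl_snd (N : ℕ) (hN : 1 ≤ N) : (cpl N).map Prod.snd = cubeSpectralMeasure (N+1) := by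
  unfold cpl cubeSpectralMeasure
  rw [Measure.map_smul, map_finset_sum' measurable_snd]
  have hterm : ∀ s ∈ range (N+1),
      (((N.choose s : ℝ≥0∞)) • (Measure.dirac ((2*(s:ℝ)/(N:ℝ), 2*(s:ℝ)/((N:ℝ)+1)) : ℝ × ℝ)
        + Measure.dirac ((2*(s:ℝ)/(N:ℝ), 2*((s+1:ℕ):ℝ)/((N:ℝ)+1)) : ℝ × ℝ))).map Prod.snd
      = (N.choose s : ℝ≥0∞) • (Measure.dirac (2*(s:ℝ)/((N:ℝ)+1))
          + Measure.dirac (2*((s+1:ℕ):ℝ)/((N:ℝ)+1))) := by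
    intro s _
    rw [Measure.map_smul, Measure.map_add _ _ measurable_snd,
      Measure.map_dirac' measurable_snd, Measure.map_dirac' measurable_snd]
  rw [Finset.sum_congr rfl hterm,
    pascal_measure N (fun j => Measure.dirac (2*(j:ℝ)/((N:ℝ)+1)))]
  congr 1
  refine Finset.sum_congr rfl fun j _ => ?_
  congr 1
  push_cast
  ring

lemma cpl_cost (N : ℕ) (hN : 1 ≤ N) :
    ∫ z : ℝ × ℝ, |z.1 - z.2| ∂(cpl N) = 1/((N:ℝ)+1) := by
  have hNpos : (0:ℝ) < N := by exact_mod_cast hN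
  unfold cpl
  rw [integral_comb2]
  have hterm : ∀ s ∈ range (N+1), (N.choose s : ℝ)
      * (|2*(s:ℝ)/(N:ℝ) - 2*(s:ℝ)/((N:ℝ)+1)| + |2*(s:ℝ)/(N:ℝ) - 2*((s+1:ℕ):ℝ)/((N:ℝ)+1)|)
      = (N.choose s : ℝ) * (2/((N:ℝ)+1)) := by
    intro s hs
    have hs' : (s:ℝ) ≤ N := by exact_mod_cast Nat.lt_succ_iff.mp (Finset.mem_range.mp hs)
    have h1 : 2*(s:ℝ)/(N:ℝ) - 2*(s:ℝ)/((N:ℝ)+1) = 2*(s:ℝ)/((N:ℝ)*((N:ℝ)+1)) := by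
      field_simp; ring
    have h2 : 2*(s:ℝ)/(N:ℝ) - 2*((s+1:ℕ):ℝ)/((N:ℝ)+1)
        = -(2*((N:ℝ)-(s:ℝ))/((N:ℝ)*((N:ℝ)+1))) := by
      push_cast; field_simp; ring
    rw [h1, h2, abs_of_nonneg (by positivity), abs_neg,
      abs_of_nonneg (by apply div_nonneg _ (by positivity); linarith)]
    congr 1
    field_simp
    ring
  rw [Finset.sum_congr rfl hterm, ← Finset.sum_mul]
  rw [show ∑ s ∈ range (N+1), (N.choose s : ℝ) = ((2:ℝ)^N) by
    rw [← Nat.cast_sum, Nat.sum_range_choose]; push_cast; ring]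
  rw [ENNReal.toReal_inv]
  have h0 : (((2:ℝ≥0∞)^(N+1)).toReal) = (2:ℝ)^(N+1) := by simp
  rw [h0]
  have h2N : (2:ℝ)^(N+1) ≠ 0 := by positivity
  have hN1 : ((N:ℝ)+1) ≠ 0 := by positivity
  rw [pow_succ]
  field_simp

end Coupling

theorem stmt_14 (N : ℕ) (hN : 1 ≤ N) :
    wassersteinDist 1 (cubeSpectralMeasure N) (cubeSpectralMeasure (N + 1))
      = 1 / ((N : ℝ) + 1) := by
  have hNpos : (0:ℝ) < N := by exact_mod_cast hN
  have habs : (fun z : ℝ × ℝ => |z.1 - z.2| ^ (1:ℝ)) = fun z : ℝ × ℝ => |z.1 - z.2| := by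
    funext z; rw [Real.rpow_one]
  -- lower bound for every element of the cost set
  have hlb : ∀ c ∈ {c : ℝ | ∃ π : Measure (ℝ × ℝ),
      π.map Prod.fst = cubeSpectralMeasure N ∧ π.map Prod.snd = cubeSpectralMeasure (N+1) ∧
      c = (∫ z : ℝ × ℝ, |z.1 - z.2| ^ (1:ℝ) ∂π) ^ (1 / (1:ℝ))}, 1/((N:ℝ)+1) ≤ c := by
    rintro c ⟨π, hfst, hsnd, rfl⟩
    have hπuniv : π Set.univ = 1 := by
      have := congrArg (fun μ : Measure ℝ => μ Set.univ) hfst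
      simp only [Measure.map_apply measurable_fst MeasurableSet.univ, Set.preimage_univ,
        cube_univ] at this
      exact this
    have : IsProbabilityMeasure π := ⟨hπuniv⟩
    have hae1 : ∀ᵐ z : ℝ × ℝ ∂π, z.1 ∈ Set.Icc (0:ℝ) 2 := by
      rw [ae_iff]
      have hset : {z : ℝ×ℝ | z.1 ∉ Set.Icc (0:ℝ) 2} = Prod.fst ⁻¹' (Set.Icc (0:ℝ) 2)ᶜ := rfl
      rw [hset, ← Measure.map_apply measurable_fst measurableSet_Icc.compl, hfst,
        cube_compl_Icc N hN]
    have hae2 : ∀ᵐ z : ℝ × ℝ ∂π, z.2 ∈ Set.Icc (0:ℝ) 2 := by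
      rw [ae_iff]
      have hset : {z : ℝ×ℝ | z.2 ∉ Set.Icc (0:ℝ) 2} = Prod.snd ⁻¹' (Set.Icc (0:ℝ) 2)ᶜ := rfl
      rw [hset, ← Measure.map_apply measurable_snd measurableSet_Icc.compl, hsnd,
        cube_compl_Icc (N+1) (by omega)]
    have hgcont : Continuous (gf N) := (gf_lipschitz N).continuous
    have hint1 : Integrable (fun z : ℝ×ℝ => gf N z.1) π := by
      refine Integrable.mono' (integrable_const (|gf N 0| + 2))
        ((hgcont.comp continuous_fst).aestronglyMeasurable) ?_
      filter_upwards [hae1] with z hz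
      simpa [Real.norm_eq_abs] using gf_bound N z.1 hz
    have hint2 : Integrable (fun z : ℝ×ℝ => gf N z.2) π := by
      refine Integrable.mono' (integrable_const (|gf N 0| + 2))
        ((hgcont.comp continuous_snd).aestronglyMeasurable) ?_
      filter_upwards [hae2] with z hz
      simpa [Real.norm_eq_abs] using gf_bound N z.2 hz
    have hint0 : Integrable (fun z : ℝ×ℝ => |z.1 - z.2|) π := by
      refine Integrable.mono' (integrable_const 4)
        ((continuous_fst.sub continuous_snd).abs.aestronglyMeasurable) ?_
      filter_upwards [hae1, hae2] with z hz1 hz2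
      rw [Real.norm_eq_abs, abs_abs]
      have := abs_sub_abs_le_abs_sub z.1 z.2
      have h1 : |z.1| ≤ 2 := abs_le.mpr ⟨by linarith [hz1.1], hz1.2⟩
      have h2 : |z.2| ≤ 2 := abs_le.mpr ⟨by linarith [hz2.1], hz2.2⟩
      calc |z.1 - z.2| ≤ |z.1| + |z.2| := abs_sub _ _
        _ ≤ 4 := by linarith
    have hkey : ∫ z : ℝ × ℝ, (gf N z.1 - gf N z.2) ∂π ≤ ∫ z : ℝ × ℝ, |z.1 - z.2| ∂π := by
      refine integral_mono (hint1.sub hint2) hint0 fun z => ?_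
      have := gf_le N z.1 z.2
      simp only [Pi.sub_apply]
      linarith
    have heq : ∫ z : ℝ × ℝ, (gf N z.1 - gf N z.2) ∂π = 1/((N:ℝ)+1) := by
      rw [integral_sub hint1 hint2]
      have e1 : ∫ z : ℝ × ℝ, gf N z.1 ∂π = ∫ x, gf N x ∂(cubeSpectralMeasure N) := by
        rw [← hfst, integral_map measurable_fst.aemeasurable hgcont.aestronglyMeasurable]
      have e2 : ∫ z : ℝ × ℝ, gf N z.2 ∂π = ∫ x, gf N x ∂(cubeSpectralMeasure (N+1)) := by
        rw [← hsnd, integral_map measurable_snd.aemeasurable hgcont.aestronglyMeasurable]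
      rw [e1, e2, int_cube_N N hN, int_cube_N1 N hN]
      field_simp
      ring
    rw [habs]
    rw [show (1:ℝ)/(1:ℝ) = 1 by norm_num, Real.rpow_one]
    linarith [hkey, heq.symm.le, heq.le]
  unfold wassersteinDist
  have hmem : (1:ℝ)/((N:ℝ)+1) ∈ {c : ℝ | ∃ π : Measure (ℝ × ℝ),
      π.map Prod.fst = cubeSpectralMeasure N ∧ π.map Prod.snd = cubeSpectralMeasure (N+1) ∧
      c = (∫ z : ℝ × ℝ, |z.1 - z.2| ^ (1:ℝ) ∂π) ^ (1 / (1:ℝ))} := by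
    refine ⟨cpl N, cpl_fst N hN, cpl_snd N hN, ?_⟩
    rw [habs, cpl_cost N hN, show (1:ℝ)/(1:ℝ) = 1 by norm_num, Real.rpow_one]
  apply le_antisymm
  · exact csInf_le ⟨1/((N:ℝ)+1), hlb⟩ hmem
  · exact le_csInf ⟨_, hmem⟩ hlb
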